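/- Suppose for each λ in σ(S) ∪ {0}, the matrix [[A - λI, B],[C, 0]] ∈ ℝ^{(n+1)×(n+1)} has full rank n+1. Then the regulator equations X₁S = AX₁ + BU₁ + E, 0 = CX₁ and 0 = AX₂ + BU₂, 1 = CX₂ admit solutions (X₁, U₁) and (X₂, U₂). -/

import Mathlib

open Matrix

/-- A square matrix over a field with full rank is a unit. -/
lemma aux_isUnit_of_rank_eq_card {m : Type*} [Fintype m] [DecidableEq m]
    {K : Type*} [Field K] (M : Matrix m m K) (h : M.rank = Fintype.card m) :
    IsUnit M := by
  rw [← Matrix.mulVec_surjective_iff_isUnit]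
  have hr : LinearMap.range M.mulVecLin = ⊤ := by
    apply Submodule.eq_top_of_finrank_eq
    rw [← Matrix.rank, h, Module.finrank_fintype_fun_eq_card]
  intro y
  obtain ⟨x, hx⟩ := LinearMap.range_eq_top.mp hr y
  exact ⟨x, hx⟩

/-- Core complex uniqueness lemma: the homogeneous Sylvester-type system has
only the trivial solution under the nonresonance condition. -/
lemma aux_core {n q : ℕ} (Ac : Matrix (Fin n) (Fin n) ℂ) (Bc : Matrix (Fin n) (Fin 1) ℂ)
    (Cc : Matrix (Fin 1) (Fin n) ℂ) (Sc : Matrix (Fin q) (Fin q) ℂ)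
    (hunit : ∀ lam : ℂ, lam ∈ spectrum ℂ Sc →
      IsUnit (Matrix.fromBlocks (Ac - lam • 1) Bc Cc 0))
    (X : Matrix (Fin n) (Fin q) ℂ) (U : Matrix (Fin 1) (Fin q) ℂ)
    (hX : X * Sc = Ac * X + Bc * U) (hC : Cc * X = 0) : X = 0 ∧ U = 0 := by
  set P : (Fin q → ℂ) → Prop := fun v => X.mulVec v = 0 ∧ U.mulVec v = 0 with hP
  -- key step for eigenvalues
  have step : ∀ lam : ℂ, lam ∈ spectrum ℂ Sc → ∀ v : Fin q → ℂ,
      P (Sc.mulVec v - lam • v) → P v := by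
    intro lam hlam v hw
    set x := X.mulVec v with hx
    set u := U.mulVec v with hu
    have h1 : X.mulVec (Sc.mulVec v) = lam • x := by
      have := hw.1
      rw [Matrix.mulVec_sub, sub_eq_zero] at this
      rw [this]
      ext i
      simp [Matrix.mulVec_smul, hx]
    have h2 : Ac.mulVec x + Bc.mulVec u = lam • x := by
      rw [hx, hu, Matrix.mulVec_mulVec, Matrix.mulVec_mulVec, ← Matrix.add_mulVec, ← hX,
        ← Matrix.mulVec_mulVec, h1]
    have h3 : Cc.mulVec x = 0 := by
      rw [hx, Matrix.mulVec_mulVec, hC, Matrix.zero_mulVec]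
    have hM := hunit lam hlam
    have hinj : Function.Injective (Matrix.fromBlocks (Ac - lam • 1) Bc Cc
        (0 : Matrix (Fin 1) (Fin 1) ℂ)).mulVec := Matrix.mulVec_injective_iff_isUnit.mpr hM
    have hz : (Matrix.fromBlocks (Ac - lam • 1) Bc Cc
        (0 : Matrix (Fin 1) (Fin 1) ℂ)).mulVec (Sum.elim x u) = 0 := by
      rw [Matrix.fromBlocks_mulVec]
      have e1 : (Ac - lam • 1).mulVec x = Ac.mulVec x - lam • x := by
        rw [Matrix.sub_mulVec]
        congr 1
        rw [Matrix.smul_mulVec, Matrix.one_mulVec]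
      ext i
      cases i with
      | inl i =>
        simp only [Sum.elim_inl, Sum.elim_comp_inl, Sum.elim_comp_inr, e1, Pi.zero_apply]
        have : Ac.mulVec x - lam • x + Bc.mulVec u = 0 := by
          rw [sub_add_eq_add_sub, ← h2]; abel
        simpa using congrFun this i
      | inr i =>
        simp only [Sum.elim_inr, Sum.elim_comp_inl, Sum.elim_comp_inr, Matrix.zero_mulVec,
          add_zero, Pi.zero_apply]
        simpa using congrFun h3 i
    have h0 : (Matrix.fromBlocks (Ac - lam • 1) Bc Cc
        (0 : Matrix (Fin 1) (Fin 1) ℂ)).mulVec (Sum.elim x u) =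
        (Matrix.fromBlocks (Ac - lam • 1) Bc Cc
        (0 : Matrix (Fin 1) (Fin 1) ℂ)).mulVec 0 := by
      rw [hz, Matrix.mulVec_zero]
    have := hinj h0
    constructor
    · ext i; exact congrFun this (Sum.inl i)
    · ext i; exact congrFun this (Sum.inr i)
  -- the endomorphism
  set f : Module.End ℂ (Fin q → ℂ) := Sc.mulVecLin with hf
  have claim : ∀ (lam : ℂ) (k : ℕ), ∀ v : Fin q → ℂ,
      ((f - lam • (1 : Module.End ℂ (Fin q → ℂ))) ^ k) v = 0 → P v := by
    intro lam k
    induction k with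
    | zero =>
      intro v hv
      simp only [pow_zero, Module.End.one_apply] at hv
      subst hv
      exact ⟨Matrix.mulVec_zero _, Matrix.mulVec_zero _⟩
    | succ k ih =>
      intro v hv
      have hw : ((f - lam • (1 : Module.End ℂ (Fin q → ℂ))) ^ k)
          ((f - lam • (1 : Module.End ℂ (Fin q → ℂ))) v) = 0 := by
        rw [← Module.End.mul_apply, ← pow_succ]
        exact hv
      have hval : (f - lam • (1 : Module.End ℂ (Fin q → ℂ))) v = Sc.mulVec v - lam • v := by
        simp [hf]
      by_cases hlam : lam ∈ spectrum ℂ Sc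
      · exact step lam hlam v (hval ▸ ih _ hw)
      · -- lam not in spectrum : Sc - lam • 1 is a unit, so v = 0
        have hu : IsUnit ((lam • 1 : Matrix (Fin q) (Fin q) ℂ) - Sc) := by
          have := spectrum.notMem_iff.mp hlam
          rwa [Algebra.algebraMap_eq_smul_one] at this
        have hu' : IsUnit (Sc - (lam • 1 : Matrix (Fin q) (Fin q) ℂ)) := by
          have := hu.neg
          rwa [neg_sub] at this
        have hinj : Function.Injective (f - lam • (1 : Module.End ℂ (Fin q → ℂ))) := by
          intro a b hab
          have ha : ∀ w, (f - lam • (1 : Module.End ℂ (Fin q → ℂ))) w =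
              (Sc - lam • 1).mulVec w := by
            intro w
            rw [Matrix.sub_mulVec, Matrix.smul_mulVec, Matrix.one_mulVec]
            simp [hf]
          rw [ha, ha] at hab
          exact Matrix.mulVec_injective_iff_isUnit.mpr hu' hab
        have hzero : ∀ (j : ℕ) (w : Fin q → ℂ),
            ((f - lam • (1 : Module.End ℂ (Fin q → ℂ))) ^ (j+1)) w = 0 → w = 0 := by
          intro j
          induction j with
          | zero =>
            intro w hw0
            have h1 : (f - lam • (1 : Module.End ℂ (Fin q → ℂ))) w = 0 := by
              simpa using hw0
            exact hinj (by rw [h1, map_zero])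
          | succ j ih2 =>
            intro w hw0
            have h1 : ((f - lam • (1 : Module.End ℂ (Fin q → ℂ))) ^ (j+1))
                ((f - lam • (1 : Module.End ℂ (Fin q → ℂ))) w) = 0 := by
              rw [← Module.End.mul_apply, ← pow_succ]
              exact hw0
            have h2 := ih2 _ h1
            exact hinj (by rw [h2, map_zero])
        have hv0 : v = 0 := hzero k v hv
        subst hv0
        exact ⟨Matrix.mulVec_zero _, Matrix.mulVec_zero _⟩
  -- all generalized eigenvectors are in the kernel; they span
  set KK : Submodule ℂ (Fin q → ℂ) := LinearMap.ker ((X.mulVecLin).prod (U.mulVecLin)) with hKK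
  have hle : ∀ mu : ℂ, f.maxGenEigenspace mu ≤ KK := by
    intro mu v hv
    obtain ⟨k, hk⟩ := (Module.End.mem_maxGenEigenspace f mu v).mp hv
    have := claim mu k v hk
    simp only [hKK, LinearMap.mem_ker, LinearMap.prod_apply, Function.prod, Prod.mk_eq_zero]
    exact ⟨this.1, this.2⟩
  have htop : KK = ⊤ := by
    have := Module.End.iSup_maxGenEigenspace_eq_top f
    exact le_antisymm le_top (this ▸ iSup_le hle)
  have hall : ∀ v : Fin q → ℂ, X.mulVec v = 0 ∧ U.mulVec v = 0 := by
    intro v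
    have hv : v ∈ KK := htop ▸ Submodule.mem_top
    simpa [hKK, Prod.ext_iff] using hv
  constructor
  · ext i j
    have := (hall (Pi.single j 1)).1
    simpa [Matrix.mulVec_single] using congrFun this i
  · ext i j
    have := (hall (Pi.single j 1)).2
    simpa [Matrix.mulVec_single] using congrFun this i

lemma aux_map_mul {l m p : Type*} [Fintype m] (M : Matrix l m ℝ) (N : Matrix m p ℝ) :
    (M * N).map Complex.ofReal = M.map Complex.ofReal * N.map Complex.ofReal := by
  ext i j
  simp [Matrix.mul_apply, Matrix.map_apply]

lemma aux_map_add {l m : Type*} (M N : Matrix l m ℝ) :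
    (M + N).map Complex.ofReal = M.map Complex.ofReal + N.map Complex.ofReal := by
  ext i j
  simp [Matrix.map_apply, Matrix.add_apply]

lemma aux_map_zero {l m : Type*} :
    (0 : Matrix l m ℝ).map Complex.ofReal = 0 := by
  ext i j
  simp [Matrix.map_apply]

theorem regulator_equations_solvable (n q : ℕ)
    (A : Matrix (Fin n) (Fin n) ℝ) (B : Matrix (Fin n) (Fin 1) ℝ)
    (C : Matrix (Fin 1) (Fin n) ℝ) (E : Matrix (Fin n) (Fin q) ℝ)
    (S : Matrix (Fin q) (Fin q) ℝ)
    (hrank : ∀ lam : ℂ, (lam ∈ spectrum ℂ (S.map (Complex.ofReal)) ∨ lam = 0) →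
      (Matrix.fromBlocks (A.map (Complex.ofReal) - lam • (1 : Matrix (Fin n) (Fin n) ℂ))
          (B.map (Complex.ofReal)) (C.map (Complex.ofReal)) (0 : Matrix (Fin 1) (Fin 1) ℂ)).rank
        = n + 1) :
    (∃ (X₁ : Matrix (Fin n) (Fin q) ℝ) (U₁ : Matrix (Fin 1) (Fin q) ℝ),
        X₁ * S = A * X₁ + B * U₁ + E ∧ C * X₁ = 0) ∧
    (∃ (X₂ : Matrix (Fin n) (Fin 1) ℝ) (U₂ : Matrix (Fin 1) (Fin 1) ℝ),
        0 = A * X₂ + B * U₂ ∧ C * X₂ = 1) := by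
  have hcard : Fintype.card (Fin n ⊕ Fin 1) = n + 1 := by simp
  have hunit : ∀ lam : ℂ, (lam ∈ spectrum ℂ (S.map (Complex.ofReal)) ∨ lam = 0) →
      IsUnit (Matrix.fromBlocks (A.map (Complex.ofReal) - lam • (1 : Matrix (Fin n) (Fin n) ℂ))
        (B.map (Complex.ofReal)) (C.map (Complex.ofReal)) (0 : Matrix (Fin 1) (Fin 1) ℂ)) :=
    fun lam h => aux_isUnit_of_rank_eq_card _ (by rw [hrank lam h, hcard])
  constructor
  · -- Part 1 : the Sylvester-type regulator equation
    let L : (Matrix (Fin n) (Fin q) ℝ × Matrix (Fin 1) (Fin q) ℝ) →ₗ[ℝ]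
        (Matrix (Fin n) (Fin q) ℝ × Matrix (Fin 1) (Fin q) ℝ) :=
      { toFun := fun p => (p.1 * S - A * p.1 - B * p.2, C * p.1)
        map_add' := fun p r => by
          simp only [Prod.fst_add, Prod.snd_add, Prod.mk_add_mk, Prod.mk.injEq,
            Matrix.add_mul, Matrix.mul_add]
          exact ⟨by abel, trivial⟩
        map_smul' := fun c p => by
          simp only [Prod.smul_fst, Prod.smul_snd, RingHom.id_apply, Prod.smul_mk, Prod.mk.injEq,
            Matrix.smul_mul, Matrix.mul_smul, smul_sub] }
    have hinj : Function.Injective L := by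
      rw [← LinearMap.ker_eq_bot, LinearMap.ker_eq_bot']
      intro p hp
      have h1 : p.1 * S - A * p.1 - B * p.2 = 0 := congrArg Prod.fst hp
      have h2 : C * p.1 = 0 := congrArg Prod.snd hp
      have h1' : p.1 * S = A * p.1 + B * p.2 := by
        rw [sub_sub, sub_eq_zero] at h1
        rw [h1]
      have hXc : (p.1.map Complex.ofReal) * (S.map Complex.ofReal) =
          A.map Complex.ofReal * p.1.map Complex.ofReal +
            B.map Complex.ofReal * p.2.map Complex.ofReal := by
        have := congrArg (fun M => M.map Complex.ofReal) h1'
        simp only [aux_map_mul] at this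
        rw [this, aux_map_add, aux_map_mul, aux_map_mul]
      have hCc : (C.map Complex.ofReal) * (p.1.map Complex.ofReal) = 0 := by
        have := congrArg (fun M => M.map Complex.ofReal) h2
        simp only [aux_map_mul] at this
        rw [this, aux_map_zero]
      obtain ⟨hX0, hU0⟩ := aux_core (A.map Complex.ofReal) (B.map Complex.ofReal)
        (C.map Complex.ofReal) (S.map Complex.ofReal)
        (fun lam hl => hunit lam (Or.inl hl)) _ _ hXc hCc
      have hp1 : p.1 = 0 := by
        ext i j
        have := congrFun (congrFun hX0 i) j
        simpa [Matrix.map_apply, Complex.ofReal_eq_zero] using this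
      have hp2 : p.2 = 0 := by
        ext i j
        have := congrFun (congrFun hU0 i) j
        simpa [Matrix.map_apply, Complex.ofReal_eq_zero] using this
      exact Prod.ext hp1 hp2
    have hsurj : Function.Surjective L :=
      (LinearMap.injective_iff_surjective_of_finrank_eq_finrank rfl).mp hinj
    obtain ⟨⟨X₁, U₁⟩, hXU⟩ := hsurj (E, 0)
    have h1 : X₁ * S - A * X₁ - B * U₁ = E := congrArg Prod.fst hXU
    have h2 : C * X₁ = 0 := congrArg Prod.snd hXU
    refine ⟨X₁, U₁, ?_, h2⟩
    rw [sub_sub, sub_eq_iff_eq_add] at h1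
    rw [h1]
    abel
  · -- Part 2 : invertibility of the regulator matrix at λ = 0
    set M₀ : Matrix (Fin n ⊕ Fin 1) (Fin n ⊕ Fin 1) ℝ :=
      Matrix.fromBlocks A B C 0 with hM₀
    have hdetM₀ : IsUnit M₀.det := by
      have hc := hunit 0 (Or.inr rfl)
      simp only [zero_smul, sub_zero] at hc
      have hm : M₀.map Complex.ofReal = Matrix.fromBlocks (A.map Complex.ofReal)
          (B.map Complex.ofReal) (C.map Complex.ofReal) 0 := by
        rw [hM₀, Matrix.fromBlocks_map]
        congr 1
      rw [← hm, Matrix.isUnit_iff_isUnit_det] at hc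
      have hdc : (M₀.map Complex.ofReal).det = Complex.ofReal M₀.det :=
        (RingHom.map_det Complex.ofRealHom M₀).symm
      rw [hdc] at hc
      have : (M₀.det : ℂ) ≠ 0 := hc.ne_zero
      have h0 : M₀.det ≠ 0 := by
        intro h
        rw [h] at this
        simp at this
      exact isUnit_iff_ne_zero.mpr h0
    set e : Matrix (Fin n ⊕ Fin 1) (Fin 1) ℝ :=
      Matrix.of fun i _ => Sum.elim (fun _ => (0:ℝ)) (fun _ => (1:ℝ)) i with he
    set Y : Matrix (Fin n ⊕ Fin 1) (Fin 1) ℝ := M₀⁻¹ * e with hY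
    have hMY : M₀ * Y = e := by
      rw [hY, ← Matrix.mul_assoc, Matrix.mul_nonsing_inv _ hdetM₀, Matrix.one_mul]
    refine ⟨Matrix.of fun i j => Y (Sum.inl i) j, Matrix.of fun i j => Y (Sum.inr i) j, ?_, ?_⟩
    · ext i j
      have h := congrFun (congrFun hMY (Sum.inl i)) j
      simp only [hM₀, he, Matrix.mul_apply, Fintype.sum_sum_type, Matrix.fromBlocks,
        Matrix.of_apply, Sum.elim_inl, Sum.elim_inr] at h
      simp only [Matrix.add_apply, Matrix.mul_apply, Matrix.of_apply, Matrix.zero_apply]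
      rw [← h]
    · ext i j
      have h := congrFun (congrFun hMY (Sum.inr i)) j
      simp only [hM₀, he, Matrix.mul_apply, Fintype.sum_sum_type, Matrix.fromBlocks,
        Matrix.of_apply, Sum.elim_inl, Sum.elim_inr, Matrix.zero_apply, zero_mul,
        Finset.sum_const_zero, add_zero] at h
      simp only [Matrix.mul_apply, Matrix.of_apply]
      rw [h]
      have : i = j := Subsingleton.elim i j
      subst this
      simp [Matrix.one_apply]
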